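/- Let H = {H_α}_{α∈π} be a Hopf π-coalgebra over a field k, i.e., a family of k-algebras with algebra maps Δ_{α,β}: H_{αβ} → H_α ⊗ H_β, counit ε: H_1 → k, and antipode maps S_α: H_α → H_{α⁻¹} satisfying the Hopf π-coalgebra axioms. Then the set {α ∈ π | H_α ≠ 0} is a subgroup of π. -/
import Mathlib

open TensorProduct

/-- Transport along an equality of indices, as a `k`-linear map. -/
def castL (k : Type) [Field k] {π : Type} (H : π → Type) [∀ α, Ring (H α)]
    [∀ α, Algebra k (H α)] {α β : π} (h : α = β) : H α →ₗ[k] H β :=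
  h ▸ (LinearMap.id : H α →ₗ[k] H α)

/-- A Hopf `π`-coalgebra over a field `k`: a family of `k`-algebras `H α` with algebra maps
`Δ_{α,β} : H (α*β) → H α ⊗ H β`, a counit `ε : H 1 → k`, and antipodes `S_α : H α → H α⁻¹`,
subject to coassociativity, the counit axioms and the antipode axioms. -/
structure HopfGrpCoalg (k : Type) [Field k] (π : Type) [Group π] (H : π → Type)
    [∀ α, Ring (H α)] [∀ α, Algebra k (H α)] where
  comul : ∀ α β : π, H (α * β) →ₐ[k] H α ⊗[k] H β
  counit : H 1 →ₐ[k] k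
  antipode : ∀ α : π, H α →ₗ[k] H α⁻¹
  coassoc : ∀ (α β γ : π) (x : H (α * β * γ)),
    (TensorProduct.assoc k (H α) (H β) (H γ))
      (TensorProduct.map (comul α β).toLinearMap LinearMap.id ((comul (α * β) γ) x))
    = TensorProduct.map LinearMap.id (comul β γ).toLinearMap
        ((comul α (β * γ)) (castL k H (mul_assoc α β γ) x))
  counit_right : ∀ (α : π) (x : H (α * 1)),
    (TensorProduct.rid k (H α))
      ((LinearMap.lTensor (H α) counit.toLinearMap) ((comul α 1) x)) = castL k H (mul_one α) x
  counit_left : ∀ (α : π) (x : H (1 * α)),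
    (TensorProduct.lid k (H α))
      ((LinearMap.rTensor (H α) counit.toLinearMap) ((comul 1 α) x)) = castL k H (one_mul α) x
  antipode_mul : ∀ (α : π) (x : H 1),
    (LinearMap.mul' k (H α))
      (TensorProduct.map (castL k H (inv_inv α) ∘ₗ antipode α⁻¹) LinearMap.id
        ((comul α⁻¹ α) (castL k H (inv_mul_cancel α).symm x)))
    = counit x • 1
  mul_antipode : ∀ (α : π) (x : H 1),
    (LinearMap.mul' k (H α))
      (TensorProduct.map LinearMap.id (castL k H (inv_inv α) ∘ₗ antipode α⁻¹)
        ((comul α α⁻¹) (castL k H (mul_inv_cancel α).symm x)))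
    = counit x • 1

lemma tmul_one_one_ne_zero (k : Type) [Field k] (A B : Type) [Ring A] [Ring B]
    [Algebra k A] [Algebra k B] (hA : (1 : A) ≠ 0) (hB : (1 : B) ≠ 0) :
    ((1 : A) ⊗ₜ[k] (1 : B)) ≠ 0 := by
  obtain ⟨φ, hφ⟩ : ∃ φ : Module.Dual k A, φ 1 ≠ 0 := by
    by_contra h
    push_neg at h
    exact hA ((Module.forall_dual_apply_eq_zero_iff k (1 : A)).mp h)
  obtain ⟨ψ, hψ⟩ : ∃ ψ : Module.Dual k B, ψ 1 ≠ 0 := by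
    by_contra h
    push_neg at h
    exact hB ((Module.forall_dual_apply_eq_zero_iff k (1 : B)).mp h)
  intro h
  have := congrArg (fun z => (TensorProduct.lid k k) (TensorProduct.map φ ψ z)) h
  simp only [map_zero, TensorProduct.map_tmul, TensorProduct.lid_tmul, smul_eq_mul] at this
  exact (mul_ne_zero hφ hψ) this

/-- For a Hopf `π`-coalgebra `H`, the set `{α ∈ π | H α ≠ 0}` is a subgroup of `π`. -/
theorem support_is_subgroup (k : Type) [Field k] (π : Type) [Group π] (H : π → Type)
    [∀ α, Ring (H α)] [∀ α, Algebra k (H α)] (Hc : HopfGrpCoalg k π H) :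
    ∃ G : Subgroup π, (G : Set π) = {α : π | ∃ x : H α, x ≠ 0} := by
  -- reduce membership to `1 ≠ 0`
  have mem_iff : ∀ α : π, (∃ x : H α, x ≠ 0) ↔ (1 : H α) ≠ 0 := by
    intro α
    constructor
    · rintro ⟨x, hx⟩ h1
      exact hx (by calc x = x * 1 := (mul_one x).symm
                      _ = 0 := by rw [h1, mul_zero])
    · intro h; exact ⟨1, h⟩
  refine ⟨{ carrier := {α : π | ∃ x : H α, x ≠ 0}
            one_mem' := ?_
            mul_mem' := ?_
            inv_mem' := ?_ }, rfl⟩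
  · -- closure under multiplication
    intro α β hα hβ
    rw [Set.mem_setOf_eq, mem_iff] at hα hβ ⊢
    intro h1
    have h := map_one (Hc.comul α β)
    rw [h1, map_zero, Algebra.TensorProduct.one_def] at h
    exact tmul_one_one_ne_zero k (H α) (H β) hα hβ h.symm
  · -- `ε 1 = 1 ≠ 0` in `k`, so `1 ≠ 0` in `H 1`
    rw [Set.mem_setOf_eq, mem_iff]
    intro h1
    have : (Hc.counit (1 : H 1)) = (1 : k) := map_one Hc.counit
    rw [h1, map_zero] at this
    exact one_ne_zero this.symm
  · -- closure under inverse
    intro α hα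
    rw [Set.mem_setOf_eq, mem_iff] at hα ⊢
    intro h1
    -- `H α⁻¹` is trivial, hence so is the tensor product, and the antipode axiom gives
    -- Careful: hα : (1 : H α) ≠ 0, h1 : (1 : H α⁻¹) = 0.
    haveI : Subsingleton (H α⁻¹) := subsingleton_of_zero_eq_one h1.symm
    have hsub : ∀ z : H α⁻¹ ⊗[k] H α, z = 0 := by
      intro z
      induction z using TensorProduct.induction_on with
      | zero => rfl
      | tmul x y => rw [Subsingleton.elim x (0 : H α⁻¹), TensorProduct.zero_tmul]
      | add x y hx hy => rw [hx, hy, add_zero]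
    have key := Hc.antipode_mul α (1 : H 1)
    rw [hsub ((Hc.comul α⁻¹ α) (castL k H (inv_mul_cancel α).symm 1))] at key
    simp only [map_zero, map_one, one_smul] at key
    exact hα key.symm
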